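/- For an odd prime r and 0 < k ≤ (r-1)/2, the integer c_k = (r/(r-k)) * binomial(r-k, k) is divisible by r. -/

import Mathlib

/-- For an odd prime `r` and `0 < k ≤ (r-1)/2`, the integer
`c_k = (r/(r-k)) * (r-k).choose k` is divisible by `r`. -/
theorem ck_divisible_by_r (r k : ℕ) (hr : r.Prime) (hodd : Odd r)
    (hk0 : 0 < k) (hk : k ≤ (r - 1) / 2) :
    ∃ m : ℤ, ((r : ℚ) / ((r : ℚ) - (k : ℚ))) * ((r - k).choose k : ℚ) = (r : ℚ) * (m : ℚ) := by
  have hk_lt : k < r := lt_of_le_of_lt (hk.trans (Nat.div_le_self _ _))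
    (Nat.sub_lt hr.pos one_pos)
  set n := r - k with hn
  have hn_pos : 0 < n := Nat.sub_pos_of_lt hk_lt
  -- gcd(n, k) = 1
  have hcop : Nat.Coprime n k := by
    have h1 : Nat.Coprime r k := (hr.coprime_iff_not_dvd).mpr
      (fun h => absurd (Nat.le_of_dvd hk0 h) (not_le.mpr hk_lt))
    have : Nat.Coprime (n + k) k := by
      rwa [hn, Nat.sub_add_cancel hk_lt.le]
    simpa [Nat.coprime_add_self_left] using this
  -- n ∣ choose n k
  have hdvd : n ∣ n.choose k := by
    have key : n * (n - 1).choose (k - 1) = n.choose k * k := by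
      have := Nat.add_one_mul_choose_eq (n - 1) (k - 1)
      have e1 : n - 1 + 1 = n := Nat.succ_pred_eq_of_pos hn_pos
      have e2 : k - 1 + 1 = k := Nat.succ_pred_eq_of_pos hk0
      rwa [e1, e2] at this
    exact hcop.dvd_of_dvd_mul_right ⟨_, key.symm⟩
  obtain ⟨m, hm⟩ := hdvd
  refine ⟨m, ?_⟩
  have hcast : ((r : ℚ) - (k : ℚ)) = (n : ℚ) := by
    rw [hn]; push_cast [hk_lt.le]; ring
  have hn0 : (n : ℚ) ≠ 0 := Nat.cast_ne_zero.mpr hn_pos.ne'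
  rw [hcast, hm]
  push_cast
  field_simp
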